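/- Let π = (d_1,…,d_n) be a non-increasing graphic sequence and define the complementary sequence π̄ = (n−1−d_n, n−1−d_{n−1}, …, n−1−d_1). Let m(π) = max{ i : d_i ≥ i−1 }. Then m(π) + m(π̄) = n+1 if d_{m(π)} = m(π) − 1, and m(π) + m(π̄) = n otherwise. -/

import Mathlib

open SimpleGraph

attribute [local instance] Classical.propDecidable

theorem durfee_complement
    (n : ℕ) (hn : 0 < n) (d : ℕ → ℕ)
    (hdec : ∀ i j, 1 ≤ i → i ≤ j → j ≤ n → d j ≤ d i)
    (hgraphic : ∃ G : SimpleGraph (Fin n), ∀ i : Fin n, G.degree i = d (i.1 + 1))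
    (m mbar : ℕ)
    -- `m` is the modified Durfee number of `π`: the largest `i ∈ [1,n]` with `d i ≥ i - 1`
    (hm : 1 ≤ m ∧ m ≤ n ∧ m - 1 ≤ d m ∧
      ∀ i, 1 ≤ i → i ≤ n → i - 1 ≤ d i → i ≤ m)
    -- `mbar` is the modified Durfee number of the complementary sequence
    -- `π̄_i = n - 1 - d (n + 1 - i)`
    (hmbar : 1 ≤ mbar ∧ mbar ≤ n ∧ mbar - 1 ≤ n - 1 - d (n + 1 - mbar) ∧
      ∀ i, 1 ≤ i → i ≤ n → i - 1 ≤ n - 1 - d (n + 1 - i) → i ≤ mbar) :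
    if d m = m - 1 then m + mbar = n + 1 else m + mbar = n := by
  obtain ⟨hm1, hmn, hmd, hmmax⟩ := hm
  obtain ⟨hb1, hbn, hbd, hbmax⟩ := hmbar
  -- degree bound: d n < n
  obtain ⟨G, hG⟩ := hgraphic
  have hdn : d n < n := by
    have h1 := hG ⟨n - 1, by omega⟩
    have h2 : G.degree ⟨n - 1, by omega⟩ < Fintype.card (Fin n) :=
      SimpleGraph.degree_lt_card_verts _
    simp only [Fintype.card_fin] at h2
    have h3 : (n - 1) + 1 = n := by omega
    rw [h3] at h1
    omega
  split_ifs with h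
  · -- case d m = m - 1 : show m + mbar = n + 1
    have h1 : n + 1 - m ≤ mbar := by
      apply hbmax (n + 1 - m) (by omega) (by omega)
      have heq : n + 1 - (n + 1 - m) = m := by omega
      rw [heq, h]
      omega
    have h2 : mbar ≤ n + 1 - m := by
      by_contra hc
      push_neg at hc
      have ha : d m ≤ d (n + 1 - mbar) := hdec (n + 1 - mbar) m (by omega) (by omega) hmn
      omega
    omega
  · -- case d m ≥ m : show m + mbar = n
    have hdm : m ≤ d m := by omega
    have hmlt : m < n := by
      by_contra hc
      have hmn' : m = n := by omega
      rw [hmn'] at hdm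
      omega
    have hd1 : ¬ m ≤ d (m + 1) := by
      intro hh
      have := hmmax (m + 1) (by omega) (by omega) (by simpa using hh)
      omega
    have h1 : n - m ≤ mbar := by
      apply hbmax (n - m) (by omega) (by omega)
      have heq : n + 1 - (n - m) = m + 1 := by omega
      rw [heq]
      omega
    have h2 : mbar ≤ n - m := by
      by_contra hc
      push_neg at hc
      have ha : d m ≤ d (n + 1 - mbar) := hdec (n + 1 - mbar) m (by omega) (by omega) hmn
      omega
    omega
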